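/- Let n ≥ 4, τ an odd permutation in S_n, and π the permutation representation of S_n on ℂⁿ. Then there exists a unitary element v in the group C*-algebra C*(A_n) (equivalently, in the finite-dimensional group algebra ℂ[A_n] with its canonical C*-structure) such that π̃(v) = π(τ), where π̃ is the integrated representation of ℂ[A_n]. -/

import Mathlib

open Matrix

/-- The permutation matrix of `σ`: entry `(i, j)` is `1` if `σ j = i` and `0` otherwise. -/
def permMat (n : ℕ) (σ : Equiv.Perm (Fin n)) : Matrix (Fin n) (Fin n) ℂ :=
  Matrix.of fun i j => if σ j = i then 1 else 0

/-- The canonical involution on the group algebra `ℂ[G]`: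
`(Σ a_σ σ)* = Σ conj(a_σ) σ⁻¹`. -/
noncomputable def gaStar {G : Type*} [Group G] (v : MonoidAlgebra ℂ G) :
    MonoidAlgebra ℂ G :=
  MonoidAlgebra.ofCoeff
    (Finsupp.mapRange (starRingEnd ℂ) (by simp) (Finsupp.equivMapDomain (Equiv.inv G) v.coeff))

/-- The integrated representation `π̃ : ℂ[A_n] → M_n(ℂ)` of the permutation
representation. -/
noncomputable def tildePi (n : ℕ) (v : MonoidAlgebra ℂ (alternatingGroup (Fin n))) :
    Matrix (Fin n) (Fin n) ℂ :=
  v.coeff.sum fun σ c => c • permMat n (σ : Equiv.Perm (Fin n))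

open Equiv Finset

section Aux

variable {n : ℕ}

abbrev AG (n : ℕ) := alternatingGroup (Fin n)

/-! ### gaStar basics -/

lemma gaStar_apply {G : Type*} [Group G] (v : MonoidAlgebra ℂ G) (g : G) :
    (gaStar v).coeff g = starRingEnd ℂ (v.coeff g⁻¹) := by
  simp [gaStar, Finsupp.mapRange_apply, Finsupp.equivMapDomain_apply, Equiv.inv]

lemma gaStar_single {G : Type*} [Group G] (a : G) (c : ℂ) :
    gaStar (MonoidAlgebra.single a c) = MonoidAlgebra.single a⁻¹ (starRingEnd ℂ c) := by
  ext g
  rw [gaStar_apply, MonoidAlgebra.coeff_single, MonoidAlgebra.coeff_single]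
  by_cases hg : g = a⁻¹
  · subst hg; simp
  · rw [Finsupp.single_eq_of_ne (fun h => hg (by rw [← h, inv_inv])),
      Finsupp.single_eq_of_ne (fun h => hg h)]
    simp

lemma gaStar_one {G : Type*} [Group G] : gaStar (1 : MonoidAlgebra ℂ G) = 1 := by
  rw [MonoidAlgebra.one_def, gaStar_single]; simp [MonoidAlgebra.one_def]

lemma gaStar_add {G : Type*} [Group G] (v w : MonoidAlgebra ℂ G) :
    gaStar (v + w) = gaStar v + gaStar w := by
  ext g
  rw [gaStar_apply]
  rw [MonoidAlgebra.coeff_add, MonoidAlgebra.coeff_add, Finsupp.add_apply, Finsupp.add_apply, gaStar_apply, gaStar_apply, map_add]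

lemma gaStar_smul {G : Type*} [Group G] (c : ℂ) (v : MonoidAlgebra ℂ G) :
    gaStar (c • v) = (starRingEnd ℂ c) • gaStar v := by
  ext g
  rw [gaStar_apply, MonoidAlgebra.coeff_smul_apply, MonoidAlgebra.coeff_smul_apply, gaStar_apply, smul_eq_mul,
    smul_eq_mul, _root_.map_mul]

lemma gaStar_single_one_mul {G : Type*} [Group G] (g : G) (x : MonoidAlgebra ℂ G) :
    gaStar (MonoidAlgebra.single g 1 * x) = gaStar x * MonoidAlgebra.single g⁻¹ 1 := by
  ext a
  rw [gaStar_apply, MonoidAlgebra.coeff_single_mul_apply, MonoidAlgebra.coeff_mul_single_apply,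
    gaStar_apply]
  simp [mul_comm, _root_.mul_inv_rev]

/-! ### permMat and tildePi basics -/

lemma permMat_one : permMat n 1 = 1 := by
  ext i j
  simp [permMat, Matrix.one_apply, eq_comm]

lemma permMat_mul (σ ρ : Perm (Fin n)) :
    permMat n (σ * ρ) = permMat n σ * permMat n ρ := by
  ext i j
  rw [Matrix.mul_apply]
  have : ∀ k, permMat n σ i k * permMat n ρ k j
      = if ρ j = k then (if σ k = i then (1:ℂ) else 0) else 0 := by
    intro k
    by_cases h : ρ j = k <;> simp [permMat, h, mul_comm]
  rw [Finset.sum_congr rfl fun k _ => this k, Finset.sum_ite_eq]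
  simp [permMat, Perm.mul_apply]
  congr

/-- The permutation representation as a monoid hom. -/
noncomputable def permHom (n : ℕ) : AG n →* Matrix (Fin n) (Fin n) ℂ where
  toFun σ := permMat n (σ : Perm (Fin n))
  map_one' := permMat_one
  map_mul' _ _ := permMat_mul _ _

/-- `tildePi` as an algebra hom. -/
noncomputable def tildePiHom (n : ℕ) :
    MonoidAlgebra ℂ (AG n) →ₐ[ℂ] Matrix (Fin n) (Fin n) ℂ :=
  MonoidAlgebra.lift ℂ _ (AG n) (permHom n)

lemma tildePi_eq_hom (v : MonoidAlgebra ℂ (AG n)) : tildePi n v = tildePiHom n v := by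
  rw [tildePiHom, MonoidAlgebra.lift_apply]; rfl

lemma tildePi_eq_sum (v : MonoidAlgebra ℂ (AG n)) :
    tildePi n v = ∑ σ : AG n, v.coeff σ • permMat n (σ : Perm (Fin n)) :=
  Finsupp.sum_of_support_subset v.coeff (Finset.subset_univ _) _ (fun i _ => zero_smul _ _)

lemma tildePi_single (g : AG n) (c : ℂ) :
    tildePi n (MonoidAlgebra.single g c) = c • permMat n (g : Perm (Fin n)) :=
  Finsupp.sum_single_index (zero_smul _ _)



lemma exists_fresh {n : ℕ} (hn : 4 ≤ n) (a c : Fin n) :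
    ∃ x y : Fin n, x ≠ y ∧ x ≠ a ∧ x ≠ c ∧ y ≠ a ∧ y ≠ c := by
  have hcard : 1 < (univ \ {a, c} : Finset (Fin n)).card := by
    have h1 : ({a, c} : Finset (Fin n)).card ≤ 2 := card_insert_le _ _ |>.trans (by simp)
    have h2 : (univ \ {a, c} : Finset (Fin n)).card = n - ({a, c} : Finset (Fin n)).card := by
      rw [card_sdiff_of_subset (subset_univ _), card_univ, Fintype.card_fin]
    omega
  obtain ⟨x, hx, y, hy, hxy⟩ := Finset.one_lt_card.mp hcard
  simp only [mem_sdiff, mem_univ, mem_insert, mem_singleton, true_and, not_or] at hx hy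
  exact ⟨x, y, hxy, hx.1, hx.2, hy.1, hy.2⟩

lemma alt_trans2 {n : ℕ} (hn : 4 ≤ n) {a c a' c' : Fin n} (h : a ≠ c) (h' : a' ≠ c') :
    ∃ σ : AG n, (σ : Perm (Fin n)) a = a' ∧ (σ : Perm (Fin n)) c = c' := by
  set s1 : Perm (Fin n) := Equiv.swap a a' with hs1
  set σ₀ : Perm (Fin n) := Equiv.swap (s1 c) c' * s1 with hσ₀
  have hsc : s1 c ≠ c' ∨ True := Or.inr trivial
  have h0a : σ₀ a = a' := by
    have h1 : s1 a = a' := Equiv.swap_apply_left a a'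
    have h2 : a' ≠ s1 c := fun hh => h (s1.injective (h1.trans hh))
    rw [hσ₀, Perm.mul_apply, h1, Equiv.swap_apply_of_ne_of_ne h2 h']
  have h0c : σ₀ c = c' := by
    rw [hσ₀, Perm.mul_apply, Equiv.swap_apply_left]
  obtain ⟨x, y, hxy, hxa, hxc, hya, hyc⟩ := exists_fresh hn a c
  rcases Int.units_eq_one_or (Perm.sign σ₀) with hs | hs
  · exact ⟨⟨σ₀, Perm.mem_alternatingGroup.mpr hs⟩, h0a, h0c⟩
  · refine ⟨⟨σ₀ * Equiv.swap x y, Perm.mem_alternatingGroup.mpr ?_⟩, ?_, ?_⟩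
    · rw [_root_.map_mul, hs, Perm.sign_swap hxy]; norm_num
    · show (σ₀ * Equiv.swap x y) a = a'
      rw [Perm.mul_apply, Equiv.swap_apply_of_ne_of_ne hxa.symm hya.symm, h0a]
    · show (σ₀ * Equiv.swap x y) c = c'
      rw [Perm.mul_apply, Equiv.swap_apply_of_ne_of_ne hxc.symm hyc.symm, h0c]

def Mnat (n : ℕ) (a b : Fin n) : ℕ :=
  (univ.filter fun σ : AG n => (σ : Perm (Fin n)) a = b).card

def Knat (n : ℕ) (a b c d : Fin n) : ℕ :=
  (univ.filter fun σ : AG n => (σ : Perm (Fin n)) a = b ∧ (σ : Perm (Fin n)) c = d).card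

lemma alt_trans1 {n : ℕ} (hn : 4 ≤ n) (a a' : Fin n) :
    ∃ σ : AG n, (σ : Perm (Fin n)) a = a' := by
  haveI : Nontrivial (Fin n) := ⟨⟨⟨0, by omega⟩, ⟨1, by omega⟩, by simp [Fin.ext_iff]⟩⟩
  obtain ⟨c, hc⟩ := exists_ne a
  obtain ⟨c', hc'⟩ := exists_ne a'
  obtain ⟨σ, h1, -⟩ := alt_trans2 hn (Ne.symm hc) (Ne.symm hc')
  exact ⟨σ, h1⟩

lemma Mnat_eq {n : ℕ} (hn : 4 ≤ n) (a b a' b' : Fin n) : Mnat n a b = Mnat n a' b' := by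
  obtain ⟨l, hl⟩ := alt_trans1 hn a' a
  obtain ⟨r, hr⟩ := alt_trans1 hn b b'
  unfold Mnat
  refine Finset.card_nbij' (fun σ => r * σ * l) (fun σ => r⁻¹ * σ * l⁻¹) ?_ ?_ ?_ ?_
  · intro σ hσ
    simp only [mem_coe, mem_filter, mem_univ, true_and] at hσ ⊢
    simp [Perm.mul_apply, hl, hσ, hr]
  · intro σ hσ
    simp only [mem_coe, mem_filter, mem_univ, true_and] at hσ ⊢
    have : (r⁻¹ : AG n).1 ((σ : AG n).1 ((l⁻¹ : AG n).1 a)) = b := by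
      have h1 : (l⁻¹ : AG n).1 a = a' := by
        rw [← hl]; exact (Equiv.symm_apply_apply _ _ : _)
      rw [h1, hσ, ← hr]
      exact (Equiv.symm_apply_apply _ _ : _)
    simpa [Perm.mul_apply] using this
  · intro σ _; group
  · intro σ _; group

lemma Knat_eq {n : ℕ} (hn : 4 ≤ n) {a b c d a' b' c' d' : Fin n} (hac : a ≠ c) (hbd : b ≠ d)
    (hac' : a' ≠ c') (hbd' : b' ≠ d') : Knat n a b c d = Knat n a' b' c' d' := by
  obtain ⟨l, hl1, hl2⟩ := alt_trans2 hn hac' hac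
  obtain ⟨r, hr1, hr2⟩ := alt_trans2 hn hbd hbd'
  unfold Knat
  refine Finset.card_nbij' (fun σ => r * σ * l) (fun σ => r⁻¹ * σ * l⁻¹) ?_ ?_ ?_ ?_
  · intro σ hσ
    simp only [mem_coe, mem_filter, mem_univ, true_and] at hσ ⊢
    simp [Perm.mul_apply, hl1, hl2, hσ.1, hσ.2, hr1, hr2]
  · intro σ hσ
    simp only [mem_coe, mem_filter, mem_univ, true_and] at hσ ⊢
    constructor
    · have h1 : (l⁻¹ : AG n).1 a = a' := by rw [← hl1]; exact (Equiv.symm_apply_apply _ _ : _)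
      have h2 : (r⁻¹ : AG n).1 ((σ : AG n).1 ((l⁻¹ : AG n).1 a)) = b := by
        rw [h1, hσ.1, ← hr1]; exact (Equiv.symm_apply_apply _ _ : _)
      simpa [Perm.mul_apply] using h2
    · have h1 : (l⁻¹ : AG n).1 c = c' := by rw [← hl2]; exact (Equiv.symm_apply_apply _ _ : _)
      have h2 : (r⁻¹ : AG n).1 ((σ : AG n).1 ((l⁻¹ : AG n).1 c)) = d := by
        rw [h1, hσ.2, ← hr2]; exact (Equiv.symm_apply_apply _ _ : _)
      simpa [Perm.mul_apply] using h2
  · intro σ _; group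
  · intro σ _; group

lemma Nc_eq {n : ℕ} (hn : 4 ≤ n) {p0 p1 : Fin n} (hp : p0 ≠ p1) (a b c d : Fin n) :
    ∑ σ : AG n, (if (σ : Perm (Fin n)) a = b then (1:ℂ) else 0)
        * (if (σ : Perm (Fin n)) c = d then 1 else 0)
    = (Mnat n p0 p0 : ℂ) * (if a = c then (1:ℂ) else 0) * (if b = d then 1 else 0)
      + (Knat n p0 p0 p1 p1 : ℂ) * (1 - if a = c then (1:ℂ) else 0)
        * (1 - if b = d then 1 else 0) := by
  by_cases hac : a = c <;> by_cases hbd : b = d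
  · subst hac; subst hbd
    have e1 : ∀ σ : AG n, (if (σ : Perm (Fin n)) a = b then (1:ℂ) else 0)
        * (if (σ : Perm (Fin n)) a = b then (1:ℂ) else 0)
        = if (σ : Perm (Fin n)) a = b then (1:ℂ) else 0 := by
      intro σ; by_cases h : (σ : Perm (Fin n)) a = b <;> simp [h]
    rw [Finset.sum_congr rfl fun σ _ => e1 σ, Finset.sum_boole]
    have hM : #(filter (fun x : AG n => (x : Perm (Fin n)) a = b) univ) = Mnat n p0 p0 := by
      rw [← Mnat_eq hn a b p0 p0]; unfold Mnat; congr 1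
    rw [hM]; simp
  · subst hac
    have e1 : ∀ σ : AG n, (if (σ : Perm (Fin n)) a = b then (1:ℂ) else 0)
        * (if (σ : Perm (Fin n)) a = d then 1 else 0) = 0 := by
      intro σ
      by_cases h : (σ : Perm (Fin n)) a = b
      · have h2 : ¬ ((σ : Perm (Fin n)) a = d) := fun hh => hbd (h.symm.trans hh)
        simp [h, h2, hbd]
      · simp [h]
    rw [Finset.sum_congr rfl fun σ _ => e1 σ]
    simp [hbd]
  · subst hbd
    have e1 : ∀ σ : AG n, (if (σ : Perm (Fin n)) a = b then (1:ℂ) else 0)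
        * (if (σ : Perm (Fin n)) c = b then 1 else 0) = 0 := by
      intro σ
      by_cases h : (σ : Perm (Fin n)) a = b
      · have h2 : ¬ ((σ : Perm (Fin n)) c = b) :=
          fun hh => hac ((σ : Perm (Fin n)).injective (h.trans hh.symm))
        simp [h, h2, hac]
      · simp [h]
    rw [Finset.sum_congr rfl fun σ _ => e1 σ]
    simp [hac]
  · have e1 : ∀ σ : AG n, (if (σ : Perm (Fin n)) a = b then (1:ℂ) else 0)
        * (if (σ : Perm (Fin n)) c = d then 1 else 0)
        = if ((σ : Perm (Fin n)) a = b ∧ (σ : Perm (Fin n)) c = d) then (1:ℂ) else 0 := by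
      intro σ
      by_cases h1 : (σ : Perm (Fin n)) a = b <;> by_cases h2 : (σ : Perm (Fin n)) c = d <;>
        simp [h1, h2]
    rw [Finset.sum_congr rfl fun σ _ => e1 σ, Finset.sum_boole]
    have hK : #(filter (fun x : AG n =>
        (x : Perm (Fin n)) a = b ∧ (x : Perm (Fin n)) c = d) univ) = Knat n p0 p0 p1 p1 := by
      rw [← Knat_eq hn hac hbd hp hp]; unfold Knat; congr 1
    rw [hK]; simp [hac, hbd]

noncomputable def Ff (n : ℕ) (t : Perm (Fin n)) : MonoidAlgebra ℂ (AG n) :=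
  MonoidAlgebra.ofCoeff <| Finsupp.equivFunOnFinite.symm fun σ =>
    ∑ k : Fin n, ((if (σ : Perm (Fin n)) (t k) = k then (1:ℂ) else 0)
      - (if (σ : Perm (Fin n)) k = k then (1:ℂ) else 0))

lemma Ff_apply {n : ℕ} (t : Perm (Fin n)) (σ : AG n) :
    (Ff n t).coeff σ = ∑ k : Fin n, ((if (σ : Perm (Fin n)) (t k) = k then (1:ℂ) else 0)
      - (if (σ : Perm (Fin n)) k = k then (1:ℂ) else 0)) := rfl

lemma sum_pick {n : ℕ} (c : Fin n) (h : Fin n → ℂ) :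
    ∑ l : Fin n, (if c = l then (1:ℂ) else 0) * h l = h c := by
  rw [Finset.sum_congr rfl fun l _ => boole_mul (c = l) (h l), Finset.sum_ite_eq]
  simp


lemma sum_pick' {n : ℕ} (c : Fin n) (h : Fin n → ℂ) :
    ∑ l : Fin n, (if l = c then (1:ℂ) else 0) * h l = h c := by
  have e : ∀ l : Fin n, (if l = c then (1:ℂ) else 0) * h l
      = if c = l then h l else 0 := by
    intro l
    by_cases hl : l = c
    · rw [if_pos hl, if_pos hl.symm, one_mul]
    · rw [if_neg hl, if_neg fun hh => hl hh.symm, zero_mul]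
  rw [Finset.sum_congr rfl fun l _ => e l, Finset.sum_ite_eq]
  simp

lemma sum_ind' {n : ℕ} (c : Fin n) : ∑ l : Fin n, (if l = c then (1:ℂ) else 0) = 1 := by
  have := sum_pick' c (fun _ => (1:ℂ))
  simpa using this

lemma ite_flip {n : ℕ} {t : Perm (Fin n)} (ht : ∀ x, t (t x) = x) (i j : Fin n) :
    (if t i = j then (1:ℂ) else 0) = (if t j = i then (1:ℂ) else 0) := by
  by_cases h : t i = j
  · rw [if_pos h, if_pos (by rw [← h, ht])]
  · rw [if_neg h, if_neg fun hh => h (by rw [← hh, ht])]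

lemma ite_tcond {n : ℕ} {t : Perm (Fin n)} (ht : ∀ x, t (t x) = x) (k j : Fin n) :
    (if t k = j then (1:ℂ) else 0) = (if k = t j then (1:ℂ) else 0) := by
  by_cases h : t k = j
  · rw [if_pos h, if_pos (by rw [← h, ht])]
  · rw [if_neg h, if_neg fun hh => h (by rw [hh, ht])]

lemma tildePi_Ff {n : ℕ} (hn : 4 ≤ n) {p0 p1 : Fin n} (hp : p0 ≠ p1)
    (t : Perm (Fin n)) (ht : ∀ x, t (t x) = x) :
    tildePi n (Ff n t)
      = (((Mnat n p0 p0 : ℂ) + (Knat n p0 p0 p1 p1 : ℂ))) • (permMat n t - 1) := by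
  rw [tildePi_eq_sum]
  ext i j
  rw [Matrix.sum_apply]
  have entry : ∀ σ : AG n, ((Ff n t).coeff σ • permMat n (σ : Perm (Fin n))) i j
      = ∑ k : Fin n, (((if (σ : Perm (Fin n)) (t k) = k then (1:ℂ) else 0)
          * (if (σ : Perm (Fin n)) j = i then 1 else 0))
        - ((if (σ : Perm (Fin n)) k = k then (1:ℂ) else 0)
          * (if (σ : Perm (Fin n)) j = i then 1 else 0))) := by
    intro σ
    rw [Matrix.smul_apply, smul_eq_mul, Ff_apply, Finset.sum_mul]
    exact Finset.sum_congr rfl fun k _ => by rw [sub_mul]; rfl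
  rw [Finset.sum_congr rfl fun σ _ => entry σ, Finset.sum_comm]
  set M : ℂ := (Mnat n p0 p0 : ℂ) with hM
  set K : ℂ := (Knat n p0 p0 p1 p1 : ℂ) with hK
  have inner : ∀ k : Fin n,
      (∑ σ : AG n, (((if (σ : Perm (Fin n)) (t k) = k then (1:ℂ) else 0)
          * (if (σ : Perm (Fin n)) j = i then 1 else 0))
        - ((if (σ : Perm (Fin n)) k = k then (1:ℂ) else 0)
          * (if (σ : Perm (Fin n)) j = i then 1 else 0))))
      = (M + K) * ((if k = i then (1:ℂ) else 0) * (if t k = j then 1 else 0)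
            - (if k = i then (1:ℂ) else 0) * (if k = j then 1 else 0))
        + (K * (if k = j then (1:ℂ) else 0) - K * (if t k = j then (1:ℂ) else 0)) := by
    intro k
    rw [Finset.sum_sub_distrib, Nc_eq hn hp (t k) k j i, Nc_eq hn hp k k j i]
    ring
  rw [Finset.sum_congr rfl fun k _ => inner k]
  rw [Finset.sum_add_distrib, ← Finset.mul_sum, Finset.sum_sub_distrib, Finset.sum_sub_distrib,
    ← Finset.mul_sum, ← Finset.mul_sum]
  rw [sum_pick' i (fun k => if t k = j then (1:ℂ) else 0),
    sum_pick' i (fun k => if k = j then (1:ℂ) else 0), sum_ind' j]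
  rw [Finset.sum_congr rfl fun k _ => ite_tcond ht k j, sum_ind' (t j)]
  rw [Matrix.smul_apply, Matrix.sub_apply, Matrix.one_apply, smul_eq_mul]
  rw [ite_flip ht i j]
  show _ = (M + K) * ((if t j = i then (1:ℂ) else 0) - if i = j then (1:ℂ) else 0)
  ring


lemma mul_apply_sum {n : ℕ} (x y : MonoidAlgebra ℂ (AG n)) (g : AG n) :
    (x * y).coeff g = ∑ σ : AG n, x.coeff σ * y.coeff (σ⁻¹ * g) := by
  rw [MonoidAlgebra.coeff_mul_apply_left]
  exact Finsupp.sum_of_support_subset x.coeff (Finset.subset_univ _) _ (fun i _ => by simp)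

lemma inv_cond {n : ℕ} (σ : Perm (Fin n)) (x y : Fin n) : σ⁻¹ x = y ↔ σ y = x :=
  ⟨fun h => by rw [← h, Perm.inv_def, Equiv.apply_symm_apply], fun h => by rw [← h, Perm.inv_def, Equiv.symm_apply_apply]⟩

lemma ite_cond_iff {P Q : Prop} [Decidable P] [Decidable Q] (h : P ↔ Q) :
    (if P then (1:ℂ) else 0) = if Q then 1 else 0 := if_congr h rfl rfl

lemma ite_comm_eq {n : ℕ} (a b : Fin n) :
    (if a = b then (1:ℂ) else 0) = if b = a then 1 else 0 := ite_cond_iff eq_comm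

lemma gaStar_Ff {n : ℕ} (t : Perm (Fin n)) (ht : ∀ x, t (t x) = x) :
    gaStar (Ff n t) = Ff n t := by
  ext g
  rw [gaStar_apply, Ff_apply, Ff_apply, map_sum]
  simp only [map_sub, apply_ite (starRingEnd ℂ), _root_.map_one, _root_.map_zero]
  have hco : ((g⁻¹ : AG n) : Perm (Fin n)) = ((g : Perm (Fin n)))⁻¹ := rfl
  rw [Finset.sum_sub_distrib, Finset.sum_sub_distrib]
  congr 1
  · have step : ∀ k : Fin n, (if ((g⁻¹ : AG n) : Perm (Fin n)) (t (t k)) = t k then (1:ℂ) else 0)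
        = (if (g : Perm (Fin n)) (t k) = k then (1:ℂ) else 0) := by
      intro k
      refine ite_cond_iff ?_
      rw [ht, hco, inv_cond]
    rw [← Equiv.sum_comp t
      (fun k => if ((g⁻¹ : AG n) : Perm (Fin n)) (t k) = k then (1:ℂ) else 0)]
    exact Finset.sum_congr rfl fun k _ => step k
  · refine Finset.sum_congr rfl fun k _ => ite_cond_iff ?_
    rw [hco, inv_cond]

lemma Ff_mul_Ff {n : ℕ} (hn : 4 ≤ n) {p0 p1 : Fin n} (hp : p0 ≠ p1)
    (t : Perm (Fin n)) (ht : ∀ x, t (t x) = x) :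
    Ff n t * Ff n t
      = ((-2 : ℂ) * ((Mnat n p0 p0 : ℂ) + (Knat n p0 p0 p1 p1 : ℂ))) • Ff n t := by
  ext g
  set M : ℂ := (Mnat n p0 p0 : ℂ) with hM
  set K : ℂ := (Knat n p0 p0 p1 p1 : ℂ) with hK
  rw [mul_apply_sum]
  have hy : ∀ σ : AG n, (Ff n t).coeff (σ⁻¹ * g)
      = ∑ l : Fin n, ((if (σ : Perm (Fin n)) l = (g : Perm (Fin n)) (t l) then (1:ℂ) else 0)
          - (if (σ : Perm (Fin n)) l = (g : Perm (Fin n)) l then (1:ℂ) else 0)) := by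
    intro σ
    rw [Ff_apply]
    refine Finset.sum_congr rfl fun l _ => ?_
    have hco : ((σ⁻¹ * g : AG n) : Perm (Fin n))
        = ((σ : Perm (Fin n)))⁻¹ * (g : Perm (Fin n)) := rfl
    congr 1
    · refine ite_cond_iff ?_
      rw [hco, Perm.mul_apply, inv_cond]
    · refine ite_cond_iff ?_
      rw [hco, Perm.mul_apply, inv_cond]
  rw [Finset.sum_congr rfl fun σ _ => by rw [Ff_apply, hy σ, Finset.sum_mul_sum]]
  rw [Finset.sum_comm]
  rw [Finset.sum_congr rfl fun k _ => Finset.sum_comm]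
  have key : ∀ k l : Fin n,
      (∑ σ : AG n, ((if (σ : Perm (Fin n)) (t k) = k then (1:ℂ) else 0)
          - (if (σ : Perm (Fin n)) k = k then (1:ℂ) else 0))
        * ((if (σ : Perm (Fin n)) l = (g : Perm (Fin n)) (t l) then (1:ℂ) else 0)
          - (if (σ : Perm (Fin n)) l = (g : Perm (Fin n)) l then (1:ℂ) else 0)))
      = (M + K) * ((if t k = l then (1:ℂ) else 0)
            * (if k = (g : Perm (Fin n)) (t l) then 1 else 0)
          - (if t k = l then (1:ℂ) else 0) * (if k = (g : Perm (Fin n)) l then 1 else 0)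
          - (if k = l then (1:ℂ) else 0) * (if k = (g : Perm (Fin n)) (t l) then 1 else 0)
          + (if k = l then (1:ℂ) else 0) * (if k = (g : Perm (Fin n)) l then 1 else 0)) := by
    intro k l
    have e : ∀ σ : AG n, ((if (σ : Perm (Fin n)) (t k) = k then (1:ℂ) else 0)
          - (if (σ : Perm (Fin n)) k = k then (1:ℂ) else 0))
        * ((if (σ : Perm (Fin n)) l = (g : Perm (Fin n)) (t l) then (1:ℂ) else 0)
          - (if (σ : Perm (Fin n)) l = (g : Perm (Fin n)) l then (1:ℂ) else 0))
        = (if (σ : Perm (Fin n)) (t k) = k then (1:ℂ) else 0)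
            * (if (σ : Perm (Fin n)) l = (g : Perm (Fin n)) (t l) then 1 else 0)
          - (if (σ : Perm (Fin n)) (t k) = k then (1:ℂ) else 0)
            * (if (σ : Perm (Fin n)) l = (g : Perm (Fin n)) l then 1 else 0)
          - (if (σ : Perm (Fin n)) k = k then (1:ℂ) else 0)
            * (if (σ : Perm (Fin n)) l = (g : Perm (Fin n)) (t l) then 1 else 0)
          + (if (σ : Perm (Fin n)) k = k then (1:ℂ) else 0)
            * (if (σ : Perm (Fin n)) l = (g : Perm (Fin n)) l then 1 else 0) := by
      intro σ; ring
    rw [Finset.sum_congr rfl fun σ _ => e σ]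
    rw [Finset.sum_add_distrib, Finset.sum_sub_distrib, Finset.sum_sub_distrib,
      Nc_eq hn hp (t k) k l ((g : Perm (Fin n)) (t l)),
      Nc_eq hn hp (t k) k l ((g : Perm (Fin n)) l),
      Nc_eq hn hp k k l ((g : Perm (Fin n)) (t l)),
      Nc_eq hn hp k k l ((g : Perm (Fin n)) l)]
    ring
  rw [Finset.sum_congr rfl fun k _ => Finset.sum_congr rfl fun l _ => key k l]
  have lsum : ∀ k : Fin n,
      (∑ l : Fin n, (M + K) * ((if t k = l then (1:ℂ) else 0)
            * (if k = (g : Perm (Fin n)) (t l) then 1 else 0)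
          - (if t k = l then (1:ℂ) else 0) * (if k = (g : Perm (Fin n)) l then 1 else 0)
          - (if k = l then (1:ℂ) else 0) * (if k = (g : Perm (Fin n)) (t l) then 1 else 0)
          + (if k = l then (1:ℂ) else 0) * (if k = (g : Perm (Fin n)) l then 1 else 0)))
      = (M + K) * (2 * (if k = (g : Perm (Fin n)) k then (1:ℂ) else 0)
          - 2 * (if k = (g : Perm (Fin n)) (t k) then 1 else 0)) := by
    intro k
    rw [← Finset.mul_sum]
    rw [Finset.sum_add_distrib, Finset.sum_sub_distrib, Finset.sum_sub_distrib,
      sum_pick (t k) (fun l => if k = (g : Perm (Fin n)) (t l) then (1:ℂ) else 0),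
      sum_pick (t k) (fun l => if k = (g : Perm (Fin n)) l then (1:ℂ) else 0),
      sum_pick k (fun l => if k = (g : Perm (Fin n)) (t l) then (1:ℂ) else 0),
      sum_pick k (fun l => if k = (g : Perm (Fin n)) l then (1:ℂ) else 0)]
    simp only [ht]
    ring
  rw [Finset.sum_congr rfl fun k _ => lsum k]
  have e2 : ∀ k : Fin n, (M + K) * (2 * (if k = (g : Perm (Fin n)) k then (1:ℂ) else 0)
        - 2 * (if k = (g : Perm (Fin n)) (t k) then 1 else 0))
      = (M + K) * (2 * (if (g : Perm (Fin n)) k = k then (1:ℂ) else 0)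
        - 2 * (if (g : Perm (Fin n)) (t k) = k then 1 else 0)) := by
    intro k
    rw [ite_comm_eq k ((g : Perm (Fin n)) k), ite_comm_eq k ((g : Perm (Fin n)) (t k))]
  rw [Finset.sum_congr rfl fun k _ => e2 k]
  rw [← Finset.mul_sum, Finset.sum_sub_distrib, ← Finset.mul_sum, ← Finset.mul_sum]
  rw [MonoidAlgebra.coeff_smul_apply, smul_eq_mul, Ff_apply, Finset.sum_sub_distrib]
  ring

end Aux

/-- For `n ≥ 4` and an odd permutation `τ ∈ S_n`, there is a unitary element `v` of the
group *-algebra `ℂ[A_n]` whose integrated representation satisfies `π̃(v) = π(τ)`. -/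
theorem exists_unitary_lifting_odd_perm (n : ℕ) (hn : 4 ≤ n)
    (τ : Equiv.Perm (Fin n)) (hτ : τ ∉ alternatingGroup (Fin n)) :
    ∃ v : MonoidAlgebra ℂ (alternatingGroup (Fin n)),
      gaStar v * v = 1 ∧ v * gaStar v = 1 ∧ tildePi n v = permMat n τ := by
  set p0 : Fin n := ⟨0, by omega⟩ with hp0
  set p1 : Fin n := ⟨1, by omega⟩ with hp1
  have hp : p0 ≠ p1 := by simp [hp0, hp1, Fin.ext_iff]
  set t : Perm (Fin n) := Equiv.swap p0 p1 with htdef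
  have ht : ∀ x, t (t x) = x := fun x => Equiv.swap_apply_self _ _ _
  have htt : t * t = 1 := by
    ext x
    simp [Perm.mul_apply, ht]
  have hsτ : Perm.sign τ = -1 := by
    rcases Int.units_eq_one_or (Perm.sign τ) with h | h
    · exact absurd (Perm.mem_alternatingGroup.mpr h) hτ
    · exact h
  have hσ0 : τ * t ∈ alternatingGroup (Fin n) := by
    rw [Perm.mem_alternatingGroup, _root_.map_mul, hsτ, htdef, Perm.sign_swap hp]
    norm_num
  set D : ℂ := (Mnat n p0 p0 : ℂ) + (Knat n p0 p0 p1 p1 : ℂ) with hD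
  have hDnat : D = ((Mnat n p0 p0 + Knat n p0 p0 p1 p1 : ℕ) : ℂ) := by
    rw [hD]; push_cast; ring
  have hDne : D ≠ 0 := by
    rw [hDnat]
    have hMpos : 0 < Mnat n p0 p0 := by
      apply Finset.card_pos.mpr
      exact ⟨1, by simp⟩
    exact Nat.cast_ne_zero.mpr (by omega)
  have hA : tildePi n (Ff n t) = D • (permMat n t - 1) := tildePi_Ff hn hp t ht
  have hC : Ff n t * Ff n t = ((-2 : ℂ) * D) • Ff n t := Ff_mul_Ff hn hp t ht
  have hS : gaStar (Ff n t) = Ff n t := gaStar_Ff t ht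
  set u : MonoidAlgebra ℂ (AG n) := 1 + D⁻¹ • Ff n t with hu
  have hu_star : gaStar u = u := by
    rw [hu, gaStar_add, gaStar_one, gaStar_smul, hS, map_inv₀, hDnat, map_natCast, ← hDnat]
  have huu : u * u = 1 := by
    have h2 : (D⁻¹ • Ff n t) * (D⁻¹ • Ff n t) = (-2 * D⁻¹) • Ff n t := by
      rw [smul_mul_assoc, mul_smul_comm, hC, smul_smul, smul_smul]
      congr 1
      calc D⁻¹ * D⁻¹ * (-2 * D) = -2 * (D⁻¹ * D) * D⁻¹ := by ring
        _ = -2 * D⁻¹ := by rw [inv_mul_cancel₀ hDne]; ring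
    rw [hu, mul_add, add_mul, add_mul, h2]
    simp only [one_mul, mul_one]
    module
  have hπu : tildePi n u = permMat n t := by
    rw [hu, tildePi_eq_hom, map_add, _root_.map_one, _root_.map_smul, ← tildePi_eq_hom, hA,
      smul_smul, inv_mul_cancel₀ hDne, one_smul]
    abel
  set σ0 : AG n := ⟨τ * t, hσ0⟩ with hs0
  refine ⟨MonoidAlgebra.single σ0 1 * u, ?_, ?_, ?_⟩
  · rw [gaStar_single_one_mul, hu_star, mul_assoc,
      ← mul_assoc (MonoidAlgebra.single σ0⁻¹ (1:ℂ)), MonoidAlgebra.single_mul_single,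
      inv_mul_cancel, one_mul, ← MonoidAlgebra.one_def, one_mul, huu]
  · rw [gaStar_single_one_mul, hu_star, mul_assoc, ← mul_assoc u, huu, one_mul,
      MonoidAlgebra.single_mul_single, mul_inv_cancel, one_mul, ← MonoidAlgebra.one_def]
  · rw [tildePi_eq_hom, _root_.map_mul, ← tildePi_eq_hom, ← tildePi_eq_hom, tildePi_single,
      hπu, one_smul]
    rw [show ((σ0 : Perm (Fin n))) = τ * t from rfl, ← permMat_mul, mul_assoc, htt, mul_one]
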